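/- Let α ∈ (0,1] and t ≥ 2 be real numbers, and let S : ℝ → ℝ be any function such that S(x) ≤ 2·x^(1+α) for all 1 ≤ x ≤ t, and S(x) ≤ 2·x^(1+α) + (1/4)·(x^(1/2) + x^((1+α)/2))·S(x^(1/2)) for all x > t. Then S(x) ≤ 4·x^(1+α) for all x ≥ 1. -/

import Mathlib

/-- Space-bound claim of Lemma 3 (lem:card): if `S` satisfies
`S(x) ≤ 2·x^(1+α)` for `1 ≤ x ≤ t` and
`S(x) ≤ 2·x^(1+α) + (1/4)·(x^(1/2) + x^((1+α)/2))·S(x^(1/2))` for `x > t`,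
then `S(x) ≤ 4·x^(1+α)` for all `x ≥ 1`. -/
theorem stmt_2 (α t : ℝ) (hα₀ : 0 < α) (hα₁ : α ≤ 1) (ht : 2 ≤ t) (S : ℝ → ℝ)
    (hbase : ∀ x : ℝ, 1 ≤ x → x ≤ t → S x ≤ 2 * x ^ (1 + α))
    (hrec : ∀ x : ℝ, t < x →
      S x ≤ 2 * x ^ (1 + α) +
        (1 / 4) * (x ^ ((1 : ℝ) / 2) + x ^ ((1 + α) / 2)) * S (x ^ ((1 : ℝ) / 2))) :
    ∀ x : ℝ, 1 ≤ x → S x ≤ 4 * x ^ (1 + α) := by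
  have key : ∀ n : ℕ, ∀ x : ℝ, 1 ≤ x → x ≤ t ^ (2 ^ n) → S x ≤ 4 * x ^ (1 + α) := by
    intro n
    induction n with
    | zero =>
      intro x hx1 hxt
      simp only [pow_zero, pow_one] at hxt
      have h2 : (0:ℝ) ≤ 2 * x ^ (1 + α) := by positivity
      have := hbase x hx1 hxt
      nlinarith [Real.rpow_pos_of_pos (lt_of_lt_of_le one_pos hx1) (1 + α)]
    | succ n ih =>
      intro x hx1 hxt
      rcases le_or_gt x t with h | h
      · have := hbase x hx1 h
        nlinarith [Real.rpow_pos_of_pos (lt_of_lt_of_le one_pos hx1) (1 + α)]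
      · have hx0 : (0:ℝ) < x := lt_of_lt_of_le one_pos hx1
        have hy1 : (1:ℝ) ≤ x ^ ((1:ℝ)/2) := Real.one_le_rpow hx1 (by norm_num)
        have hyt : x ^ ((1:ℝ)/2) ≤ t ^ (2 ^ n) := by
          have ht0 : (0:ℝ) ≤ t ^ (2 ^ n) := by positivity
          have hsq : x ≤ (t ^ (2 ^ n)) ^ (2:ℕ) := by
            rw [← pow_mul]
            calc x ≤ t ^ (2 ^ (n+1)) := hxt
            _ = t ^ (2 ^ n * 2) := by ring_nf
          calc x ^ ((1:ℝ)/2) ≤ ((t ^ (2 ^ n)) ^ (2:ℕ)) ^ ((1:ℝ)/2) := by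
                apply Real.rpow_le_rpow (le_of_lt hx0) hsq (by norm_num)
          _ = t ^ (2 ^ n) := by
                rw [← Real.rpow_natCast (t ^ (2^n)) 2, ← Real.rpow_mul ht0]
                norm_num
        have hS := ih (x ^ ((1:ℝ)/2)) hy1 hyt
        have hpow : (x ^ ((1:ℝ)/2)) ^ (1 + α) = x ^ ((1 + α)/2) := by
          rw [← Real.rpow_mul (le_of_lt hx0)]
          ring_nf
        rw [hpow] at hS
        have hrx := hrec x h
        -- bound the product term
        have ha : x ^ ((1:ℝ)/2) * x ^ ((1+α)/2) = x ^ ((2+α)/2) := by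
          rw [← Real.rpow_add hx0]; ring_nf
        have hb : x ^ ((1+α)/2) * x ^ ((1+α)/2) = x ^ (1+α) := by
          rw [← Real.rpow_add hx0]; ring_nf
        have hc : x ^ ((2+α)/2) ≤ x ^ (1+α) :=
          Real.rpow_le_rpow_of_exponent_le hx1 (by linarith)
        have hpos1 : (0:ℝ) ≤ x ^ ((1:ℝ)/2) := by positivity
        have hpos2 : (0:ℝ) ≤ x ^ ((1+α)/2) := by positivity
        have hmul : (1/4) * (x ^ ((1:ℝ)/2) + x ^ ((1+α)/2)) * S (x ^ ((1:ℝ)/2))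
            ≤ (1/4) * (x ^ ((1:ℝ)/2) + x ^ ((1+α)/2)) * (4 * x ^ ((1+α)/2)) := by
          apply mul_le_mul_of_nonneg_left hS (by positivity)
        calc S x ≤ 2 * x ^ (1 + α) +
              (1/4) * (x ^ ((1:ℝ)/2) + x ^ ((1+α)/2)) * S (x ^ ((1:ℝ)/2)) := hrx
        _ ≤ 2 * x ^ (1 + α) +
              (1/4) * (x ^ ((1:ℝ)/2) + x ^ ((1+α)/2)) * (4 * x ^ ((1+α)/2)) := by linarith
        _ = 2 * x ^ (1 + α) + (x ^ ((2+α)/2) + x ^ (1+α)) := by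
              rw [← ha, ← hb]; ring
        _ ≤ 4 * x ^ (1 + α) := by linarith
  intro x hx1
  obtain ⟨n, hn⟩ := pow_unbounded_of_one_lt x (by norm_num : (1:ℝ) < 2)
  refine key n x hx1 (le_trans (le_of_lt hn) ?_)
  calc (2:ℝ) ^ n ≤ 2 ^ (2 ^ n) := by
        apply pow_le_pow_right₀ (by norm_num) (Nat.lt_two_pow_self (n := n)).le
  _ ≤ t ^ (2 ^ n) := by
        apply pow_le_pow_left₀ (by norm_num) ht
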